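/- (Lemma 1: simplification of the dynamic program.) Define v_{T+1} = 0 and, recursively for n = T, T−1, …, 1, v_n = min_{1 ≤ a ≤ T−n+1} { ℓ_{n,a} + v_{n+a} }. For each n let ā_n = max { a : 1 ≤ a ≤ T−n+1 and L_{n,1}(y_{n,a}) ≤ ℓ_{n,1} } (this set contains a = 1, so ā_n is well defined). Then the recursion is unchanged when the range of minimization is restricted: v_n = min_{1 ≤ a ≤ ā_n} { ℓ_{n,a} + v_{n+a} } for every period n. -/

import Mathlib

open MeasureTheory ProbabilityTheory

/-- Accumulated demand `ξ_{n,k} = ξ_n + ⋯ + ξ_{n+k-1}`. -/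
noncomputable def acc {Ω : Type*} (ξ : ℕ → Ω → ℝ) (n k : ℕ) (ω : Ω) : ℝ :=
  ∑ i ∈ Finset.range k, ξ (n + i) ω

/-- Cumulative distribution function `φ_{n,k}(y) = P(ξ_{n,k} ≤ y)` of accumulated demand. -/
noncomputable def cdf {Ω : Type*} [MeasurableSpace Ω] (μ : Measure Ω) (ξ : ℕ → Ω → ℝ)
    (n k : ℕ) (y : ℝ) : ℝ :=
  (μ {ω | acc ξ n k ω ≤ y}).toReal

/-- Multi-period cost function
`L_{n,a}(y) = Σ_{k=1}^{a} (h·E[(y − ξ_{n,k})⁺] + p·E[(ξ_{n,k} − y)⁺])`. -/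
noncomputable def Lmp {Ω : Type*} [MeasurableSpace Ω] (μ : Measure Ω) (h p : ℝ)
    (ξ : ℕ → Ω → ℝ) (n a : ℕ) (y : ℝ) : ℝ :=
  ∑ k ∈ Finset.Icc 1 a,
    (h * ∫ ω, max (y - acc ξ n k ω) 0 ∂μ + p * ∫ ω, max (acc ξ n k ω - y) 0 ∂μ)

section aux

open scoped ENNReal

set_option linter.unusedSectionVars false

variable {Ω : Type*} [MeasurableSpace Ω] {μ : Measure Ω} [IsFiniteMeasure μ]

lemma myAccMeas (ξ : ℕ → Ω → ℝ) (hmeas : ∀ i, Measurable (ξ i)) (n k : ℕ) :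
    Measurable (acc ξ n k) := by
  unfold acc; exact Finset.measurable_sum _ (fun i _ => hmeas _)

lemma myAccInt (ξ : ℕ → Ω → ℝ) (hint : ∀ i, Integrable (ξ i) μ) (n k : ℕ) :
    Integrable (acc ξ n k) μ := by
  unfold acc; exact integrable_finset_sum _ (fun i _ => hint _)

lemma myAccSplit (ξ : ℕ → Ω → ℝ) (n j : ℕ) (ω : Ω) :
    acc ξ n (j + 1) ω = ξ n ω + acc ξ (n + 1) j ω := by
  simp only [acc]
  rw [Finset.sum_range_succ', Nat.add_zero, add_comm]
  congr 1
  exact Finset.sum_congr rfl fun i _ => by rw [show n + (i + 1) = n + 1 + i from by omega]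

lemma myIntMax {V : Ω → ℝ} (hV : Integrable V μ) :
    Integrable (fun ω => max (V ω) 0) μ := by
  refine hV.mono (hV.aemeasurable.max aemeasurable_const).aestronglyMeasurable ?_
  filter_upwards with ω
  simp only [Real.norm_eq_abs]
  rw [abs_of_nonneg (le_max_right _ _)]
  exact max_le (le_abs_self _) (abs_nonneg _)

lemma myIntMaxL {W : Ω → ℝ} (hW : Integrable W μ) (z : ℝ) :
    Integrable (fun ω => max (z - W ω) 0) μ :=
  myIntMax (show Integrable (fun ω => z - W ω) μ from (integrable_const z).sub hW)

lemma myIntMaxR {W : Ω → ℝ} (hW : Integrable W μ) (z : ℝ) :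
    Integrable (fun ω => max (W ω - z) 0) μ :=
  myIntMax (show Integrable (fun ω => W ω - z) μ from hW.sub (integrable_const z))

lemma myIntF {W : Ω → ℝ} (hW : Integrable W μ) (h p z : ℝ) :
    Integrable (fun ω => h * max (z - W ω) 0 + p * max (W ω - z) 0) μ :=
  ((myIntMaxL hW z).const_mul h).add ((myIntMaxR hW z).const_mul p)

lemma myIntSplit {W : Ω → ℝ} (hW : Integrable W μ) (h p z : ℝ) :
    ∫ ω, (h * max (z - W ω) 0 + p * max (W ω - z) 0) ∂μ
      = h * ∫ ω, max (z - W ω) 0 ∂μ + p * ∫ ω, max (W ω - z) 0 ∂μ := by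
  rw [integral_add ((myIntMaxL hW z).const_mul h) ((myIntMaxR hW z).const_mul p),
    integral_const_mul, integral_const_mul]

lemma myLmpRange {Ω : Type*} [MeasurableSpace Ω] (μ : Measure Ω) (h p : ℝ)
    (ξ : ℕ → Ω → ℝ) (n a : ℕ) (w : ℝ) :
    Lmp μ h p ξ n a w = ∑ j ∈ Finset.range a,
      (h * ∫ ω, max (w - acc ξ n (j + 1) ω) 0 ∂μ
        + p * ∫ ω, max (acc ξ n (j + 1) ω - w) 0 ∂μ) := by
  unfold Lmp
  rw [← Finset.Ico_add_one_right_eq_Icc, Finset.sum_Ico_eq_sum_range]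
  have : a + 1 - 1 = a := by omega
  rw [this]
  exact Finset.sum_congr rfl fun j _ => by rw [Nat.add_comm 1 j]

lemma myLmpSplit {Ω : Type*} [MeasurableSpace Ω] (μ : Measure Ω) (h p : ℝ)
    (ξ : ℕ → Ω → ℝ) (n a : ℕ) (ha : 1 ≤ a) (w : ℝ) :
    Lmp μ h p ξ n a w = Lmp μ h p ξ n 1 w + ∑ j ∈ Finset.range (a - 1),
      (h * ∫ ω, max (w - acc ξ n (j + 2) ω) 0 ∂μ
        + p * ∫ ω, max (acc ξ n (j + 2) ω - w) 0 ∂μ) := by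
  obtain ⟨b, rfl⟩ : ∃ b, a = b + 1 := ⟨a - 1, by omega⟩
  rw [myLmpRange, myLmpRange μ h p ξ n 1 w]
  rw [Finset.sum_range_succ']
  simp only [Nat.add_sub_cancel, Finset.sum_range_one, Nat.zero_add]
  rw [add_comm]

lemma myLintIndep [IsProbabilityMeasure μ] {X Y : Ω → ℝ} (hX : Measurable X) (hY : Measurable Y)
    (hXY : IndepFun X Y μ) {f : ℝ → ℝ≥0∞} (hf : Measurable f) :
    ∫⁻ ω, f (X ω + Y ω) ∂μ = ∫⁻ s, ∫⁻ ω, f (s + Y ω) ∂μ ∂(μ.map X) := by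
  haveI : IsProbabilityMeasure (μ.map X) := Measure.isProbabilityMeasure_map hX.aemeasurable
  haveI : IsProbabilityMeasure (μ.map Y) := Measure.isProbabilityMeasure_map hY.aemeasurable
  have hmap : μ.map (fun ω => (X ω, Y ω)) = (μ.map X).prod (μ.map Y) :=
    (indepFun_iff_map_prod_eq_prod_map_map hX.aemeasurable hY.aemeasurable).mp hXY
  have hfm : Measurable (fun q : ℝ × ℝ => f (q.1 + q.2)) :=
    hf.comp (measurable_fst.add measurable_snd)
  calc ∫⁻ ω, f (X ω + Y ω) ∂μ
      = ∫⁻ q, f (q.1 + q.2) ∂(μ.map (fun ω => (X ω, Y ω))) := by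
        rw [lintegral_map hfm (hX.prodMk hY)]
    _ = ∫⁻ q, f (q.1 + q.2) ∂((μ.map X).prod (μ.map Y)) := by rw [hmap]
    _ = ∫⁻ s, ∫⁻ t, f (s + t) ∂(μ.map Y) ∂(μ.map X) := lintegral_prod _ hfm.aemeasurable
    _ = ∫⁻ s, ∫⁻ ω, f (s + Y ω) ∂μ ∂(μ.map X) :=
        lintegral_congr fun s => lintegral_map (hf.comp (measurable_const.add measurable_id)) hY

lemma myKey [IsProbabilityMeasure μ] {X : Ω → ℝ} (hX : Measurable X)
    (J : ℕ) (Y : ℕ → Ω → ℝ) (hYm : ∀ j, Measurable (Y j))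
    (hXY : ∀ j, IndepFun X (Y j) μ)
    (f : ℕ → ℝ → ℝ) (hfm : ∀ j, Measurable (f j)) (hf0 : ∀ j x, 0 ≤ f j x)
    (hint1 : ∀ j s, Integrable (fun ω => f j (s + Y j ω)) μ)
    (hint2 : ∀ j, Integrable (fun ω => f j (X ω + Y j ω)) μ)
    (m : ℝ) (hm : ∀ s : ℝ, m ≤ ∑ j ∈ Finset.range J, ∫ ω, f j (s + Y j ω) ∂μ) :
    m ≤ ∑ j ∈ Finset.range J, ∫ ω, f j (X ω + Y j ω) ∂μ := by
  haveI : IsProbabilityMeasure (μ.map X) := Measure.isProbabilityMeasure_map hX.aemeasurable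
  set ν := μ.map X with hν
  set A : ℕ → ℝ≥0∞ := fun j => ∫⁻ ω, ENNReal.ofReal (f j (X ω + Y j ω)) ∂μ with hA
  set B : ℕ → ℝ → ℝ≥0∞ := fun j s => ∫⁻ ω, ENNReal.ofReal (f j (s + Y j ω)) ∂μ with hB
  have hint_eq2 : ∀ j, ∫ ω, f j (X ω + Y j ω) ∂μ = (A j).toReal := fun j =>
    integral_eq_lintegral_of_nonneg_ae (Filter.Eventually.of_forall fun ω => hf0 j _) (hint2 j).1
  have hint_eq1 : ∀ j s, ∫ ω, f j (s + Y j ω) ∂μ = (B j s).toReal := fun j s =>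
    integral_eq_lintegral_of_nonneg_ae (Filter.Eventually.of_forall fun ω => hf0 j _) (hint1 j s).1
  have hAfin : ∀ j, A j ≠ ⊤ := fun j => (hint2 j).lintegral_lt_top.ne
  have hBfin : ∀ j s, B j s ≠ ⊤ := fun j s => (hint1 j s).lintegral_lt_top.ne
  have hAB : ∀ j, A j = ∫⁻ s, B j s ∂ν := fun j =>
    myLintIndep hX (hYm j) (hXY j) (ENNReal.measurable_ofReal.comp (hfm j))
  have hBmeas : ∀ j, Measurable (B j) := by
    intro j
    exact Measurable.lintegral_prod_right'
      (f := fun q : ℝ × Ω => ENNReal.ofReal (f j (q.1 + Y j q.2)))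
      (ENNReal.measurable_ofReal.comp
        ((hfm j).comp (measurable_fst.add ((hYm j).comp measurable_snd))))
  have hpt : ∀ s, ENNReal.ofReal m ≤ ∑ j ∈ Finset.range J, B j s := by
    intro s
    calc ENNReal.ofReal m ≤ ENNReal.ofReal (∑ j ∈ Finset.range J, (B j s).toReal) := by
          apply ENNReal.ofReal_le_ofReal
          calc m ≤ ∑ j ∈ Finset.range J, ∫ ω, f j (s + Y j ω) ∂μ := hm s
            _ = _ := Finset.sum_congr rfl fun j _ => hint_eq1 j s
      _ = ∑ j ∈ Finset.range J, ENNReal.ofReal ((B j s).toReal) :=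
          ENNReal.ofReal_sum_of_nonneg (fun j _ => ENNReal.toReal_nonneg)
      _ = ∑ j ∈ Finset.range J, B j s :=
          Finset.sum_congr rfl fun j _ => ENNReal.ofReal_toReal (hBfin j s)
  have hmain : ENNReal.ofReal m ≤ ∑ j ∈ Finset.range J, A j := by
    calc ENNReal.ofReal m = ∫⁻ _, ENNReal.ofReal m ∂ν := by
          rw [lintegral_const, measure_univ, mul_one]
      _ ≤ ∫⁻ s, ∑ j ∈ Finset.range J, B j s ∂ν := lintegral_mono fun s => hpt s
      _ = ∑ j ∈ Finset.range J, ∫⁻ s, B j s ∂ν :=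
          lintegral_finset_sum _ fun j _ => hBmeas j
      _ = ∑ j ∈ Finset.range J, A j := Finset.sum_congr rfl fun j _ => (hAB j).symm
  have hsumfin : (∑ j ∈ Finset.range J, A j) ≠ ⊤ := by
    rw [ENNReal.sum_ne_top]; exact fun j _ => hAfin j
  have hfin2 : m ≤ (∑ j ∈ Finset.range J, A j).toReal := by
    rcases le_or_gt m 0 with hm0 | hm0
    · exact hm0.trans ENNReal.toReal_nonneg
    · calc m = (ENNReal.ofReal m).toReal := (ENNReal.toReal_ofReal hm0.le).symm
        _ ≤ _ := ENNReal.toReal_mono hsumfin hmain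
  calc m ≤ (∑ j ∈ Finset.range J, A j).toReal := hfin2
    _ = ∑ j ∈ Finset.range J, (A j).toReal := ENNReal.toReal_sum fun j _ => hAfin j
    _ = _ := Finset.sum_congr rfl fun j _ => (hint_eq2 j).symm

lemma mySetDesc (M : ℕ) (g : ℕ → ℝ) :
    {x : ℝ | ∃ a, 1 ≤ a ∧ a ≤ M ∧ x = g a} = ↑((Finset.Icc 1 M).image g) := by
  ext x
  simp only [Set.mem_setOf_eq, Finset.coe_image, Set.mem_image, Finset.mem_coe, Finset.mem_Icc]
  constructor
  · rintro ⟨a, h1, h2, rfl⟩; exact ⟨a, ⟨h1, h2⟩, rfl⟩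
  · rintro ⟨a, ⟨h1, h2⟩, rfl⟩; exact ⟨a, h1, h2, rfl⟩

end aux

/-- Lemma 1: the dynamic-programming recursion
`v_n = min_{1 ≤ a ≤ T−n+1} {ℓ_{n,a} + v_{n+a}}` is unchanged when the minimization is
restricted to `1 ≤ a ≤ ā_n`, where
`ā_n = max {a : 1 ≤ a ≤ T−n+1 and L_{n,1}(y_{n,a}) ≤ ℓ_{n,1}}`. -/
theorem stmt8 {Ω : Type*} [MeasurableSpace Ω] (μ : Measure Ω) [IsProbabilityMeasure μ]
    (T : ℕ) (hT : 1 ≤ T) (ξ : ℕ → Ω → ℝ)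
    (hmeas : ∀ i, Measurable (ξ i)) (hint : ∀ i, Integrable (ξ i) μ)
    (hpos : ∀ i, ∀ᵐ ω ∂μ, 0 ≤ ξ i ω)
    (hind : iIndepFun ξ μ)
    (h p K : ℝ) (hh : 0 < h) (hp : 0 < p) (hK : 0 ≤ K)
    (y : ℕ → ℕ → ℝ)
    (hyleast : ∀ n a, 1 ≤ n → 1 ≤ a → n + a - 1 ≤ T →
      IsLeast {z : ℝ | (a : ℝ) * p / (h + p) ≤ ∑ k ∈ Finset.Icc 1 a, cdf μ ξ n k z}
        (y n a))
    (hymin : ∀ n a, 1 ≤ n → 1 ≤ a → n + a - 1 ≤ T →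
      ∀ z, Lmp μ h p ξ n a (y n a) ≤ Lmp μ h p ξ n a z)
    (v : ℕ → ℝ) (hvT : v (T + 1) = 0)
    (hv : ∀ n, 1 ≤ n → n ≤ T →
      v n = sInf {x : ℝ | ∃ a, 1 ≤ a ∧ a ≤ T - n + 1 ∧
        x = (K + Lmp μ h p ξ n a (y n a)) + v (n + a)})
    (abar : ℕ → ℕ)
    (habar : ∀ n, 1 ≤ n → n ≤ T →
      IsGreatest {a : ℕ | 1 ≤ a ∧ a ≤ T - n + 1 ∧
        Lmp μ h p ξ n 1 (y n a) ≤ K + Lmp μ h p ξ n 1 (y n 1)} (abar n)) :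
    ∀ n, 1 ≤ n → n ≤ T →
      v n = sInf {x : ℝ | ∃ a, 1 ≤ a ∧ a ≤ abar n ∧
        x = (K + Lmp μ h p ξ n a (y n a)) + v (n + a)} := by
  intro n hn1 hnT
  obtain ⟨⟨hab1, habT, -⟩, habmax⟩ := habar n hn1 hnT
  -- the key inequality for a beyond abar n
  have hkey : ∀ a, 1 ≤ a → a ≤ T - n + 1 → abar n < a →
      (K + Lmp μ h p ξ n 1 (y n 1)) + v (n + 1)
        ≤ (K + Lmp μ h p ξ n a (y n a)) + v (n + a) := by
    intro a ha1 haT hlt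
    have ha2 : 2 ≤ a := by omega
    have hnaT : n + a - 1 ≤ T := by omega
    have hn1T : n + 1 ≤ T := by omega
    have hstar : K + Lmp μ h p ξ n 1 (y n 1) < Lmp μ h p ξ n 1 (y n a) := by
      by_contra hcon
      push_neg at hcon
      have := habmax ⟨ha1, haT, hcon⟩
      omega
    set z := y n a with hz
    set m0 := Lmp μ h p ξ (n + 1) (a - 1) (y (n + 1) (a - 1)) with hm0def
    set R := ∑ j ∈ Finset.range (a - 1),
      (h * ∫ ω, max (z - acc ξ n (j + 2) ω) 0 ∂μ
        + p * ∫ ω, max (acc ξ n (j + 2) ω - z) 0 ∂μ) with hRdef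
    have hsplit : Lmp μ h p ξ n a z = Lmp μ h p ξ n 1 z + R :=
      myLmpSplit μ h p ξ n a (by omega) z
    -- independence of ξ n and the shifted accumulated demands
    have hXY : ∀ j : ℕ, IndepFun (ξ n) (acc ξ (n + 1) (j + 1)) μ := by
      intro j
      have hrep : acc ξ (n + 1) (j + 1)
          = ∑ i ∈ (Finset.range (j + 1)).map
              ⟨fun i => n + 1 + i, fun a b hab => by simpa using hab⟩, ξ i := by
        funext ω
        rw [Finset.sum_apply, Finset.sum_map]
        rfl
      rw [hrep]
      refine (hind.indepFun_finsetSum_of_notMem hmeas ?_).symm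
      intro hmem
      rw [Finset.mem_map] at hmem
      obtain ⟨i, -, hi⟩ := hmem
      change n + 1 + i = n at hi
      omega
    -- m0 ≤ R via the mixing argument
    have hm0R : m0 ≤ R := by
      have hkey' := myKey (μ := μ) (hmeas n) (a - 1) (fun j => acc ξ (n + 1) (j + 1))
        (fun j => myAccMeas ξ hmeas _ _) hXY
        (fun _ x => h * max (z - x) 0 + p * max (x - z) 0)
        (fun _ => ((measurable_const.sub measurable_id).max measurable_const).const_mul h
          |>.add (((measurable_id.sub measurable_const).max measurable_const).const_mul p))
        (fun _ x => add_nonneg (mul_nonneg hh.le (le_max_right _ _))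
          (mul_nonneg hp.le (le_max_right _ _)))
        (fun j s => myIntF ((integrable_const s).add (myAccInt ξ hint (n + 1) (j + 1))) h p z)
        (fun j => myIntF ((hint n).add (myAccInt ξ hint (n + 1) (j + 1))) h p z)
        m0 ?_
      · calc m0 ≤ _ := hkey'
          _ = R := by
            rw [hRdef]
            apply Finset.sum_congr rfl
            intro j _
            beta_reduce
            rw [myIntSplit (show Integrable (fun ω => ξ n ω + acc ξ (n + 1) (j + 1) ω) μ from
              (hint n).add (myAccInt ξ hint (n + 1) (j + 1))) h p z]
            have e : ∀ ω, ξ n ω + acc ξ (n + 1) (j + 1) ω = acc ξ n (j + 2) ω := fun ω =>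
              (myAccSplit ξ n (j + 1) ω).symm
            simp only [e]
      · intro s
        have hle := hymin (n + 1) (a - 1) (by omega) (by omega) (by omega) (z - s)
        refine hle.trans (le_of_eq ?_)
        rw [myLmpRange]
        apply Finset.sum_congr rfl
        intro j _
        beta_reduce
        rw [myIntSplit (show Integrable (fun ω => s + acc ξ (n + 1) (j + 1) ω) μ from
          (integrable_const s).add (myAccInt ξ hint (n + 1) (j + 1))) h p z]
        have e1 : (fun ω => max ((z - s) - acc ξ (n + 1) (j + 1) ω) 0)
            = fun ω => max (z - (s + acc ξ (n + 1) (j + 1) ω)) 0 := by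
          funext ω
          rw [show (z - s) - acc ξ (n + 1) (j + 1) ω
            = z - (s + acc ξ (n + 1) (j + 1) ω) from by ring]
        have e2 : (fun ω => max (acc ξ (n + 1) (j + 1) ω - (z - s)) 0)
            = fun ω => max ((s + acc ξ (n + 1) (j + 1) ω) - z) 0 := by
          funext ω
          rw [show acc ξ (n + 1) (j + 1) ω - (z - s)
            = (s + acc ξ (n + 1) (j + 1) ω) - z from by ring]
        rw [e1, e2]
    -- v (n+1) is at most the (a-1)-cycle cost from n+1
    have hv1 : v (n + 1) ≤ (K + m0) + v (n + a) := by
      rw [hv (n + 1) (by omega) hn1T]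
      have hbdd : BddBelow {x : ℝ | ∃ a', 1 ≤ a' ∧ a' ≤ T - (n + 1) + 1 ∧
          x = (K + Lmp μ h p ξ (n + 1) a' (y (n + 1) a')) + v ((n + 1) + a')} := by
        rw [mySetDesc]
        exact Finset.bddBelow _
      refine csInf_le hbdd ⟨a - 1, by omega, by omega, ?_⟩
      rw [show (n + 1) + (a - 1) = n + a from by omega, hm0def]
    -- combine
    rw [hsplit]
    linarith [hm0R, hv1, hstar]
  -- now compare the two infima
  rw [hv n hn1 hnT,
    mySetDesc (T - n + 1) (fun a => (K + Lmp μ h p ξ n a (y n a)) + v (n + a)),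
    mySetDesc (abar n) (fun a => (K + Lmp μ h p ξ n a (y n a)) + v (n + a))]
  have hmem1res : ((K + Lmp μ h p ξ n 1 (y n 1)) + v (n + 1)) ∈
      ((Finset.Icc 1 (abar n)).image
        (fun a => (K + Lmp μ h p ξ n a (y n a)) + v (n + a)) : Finset ℝ) :=
    Finset.mem_image_of_mem _ (Finset.mem_Icc.mpr ⟨le_refl 1, hab1⟩)
  apply le_antisymm
  · apply csInf_le_csInf (Finset.bddBelow _) ⟨_, Finset.mem_coe.mpr hmem1res⟩
    intro x hx
    simp only [Finset.coe_image, Set.mem_image, Finset.mem_coe, Finset.mem_Icc] at hx ⊢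
    obtain ⟨a, ⟨h1, h2⟩, rfl⟩ := hx
    exact ⟨a, ⟨h1, by omega⟩, rfl⟩
  · apply le_csInf
    · refine ⟨_, Finset.mem_coe.mpr (Finset.mem_image_of_mem
        (fun a => (K + Lmp μ h p ξ n a (y n a)) + v (n + a))
        (Finset.mem_Icc.mpr ⟨le_refl 1, by omega⟩))⟩
    · intro x hx
      simp only [Finset.coe_image, Set.mem_image, Finset.mem_coe, Finset.mem_Icc] at hx
      obtain ⟨a, ⟨h1, h2⟩, rfl⟩ := hx
      rcases le_or_gt a (abar n) with hcase | hcase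
      · exact csInf_le (Finset.bddBelow _) (Finset.mem_coe.mpr
          (Finset.mem_image_of_mem _ (Finset.mem_Icc.mpr ⟨h1, hcase⟩)))
      · exact le_trans (csInf_le (Finset.bddBelow _) (Finset.mem_coe.mpr hmem1res))
          (hkey a h1 h2 hcase)
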